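/- Let T be a finite tree with a nonnegative real weight function c on its vertices. A vertex v of T is a c-median vertex (i.e., minimizes the weighted distance σ_c(v) = Σ_{w≠v} c(w)d(v,w)) if and only if the c-branch weight of v, defined as the maximum total weight of a component of T − v, is at most c(T)/2, where c(T) is the total weight of T. -/

import Mathlib

open Finset
open scoped Classical

section Helpers
variable {V : Type*} (T : SimpleGraph V) (v : V)

lemma reach_of_walk {a b : V} (p : T.Walk a b) (hp : v ∉ p.support) :
    ∀ (ha : a ∈ ({v}ᶜ : Set V)) (hb : b ∈ ({v}ᶜ : Set V)),
      (SimpleGraph.induce ({v}ᶜ : Set V) T).Reachable ⟨a, ha⟩ ⟨b, hb⟩ := by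
  induction p with
  | nil => intro _ _; rfl
  | @cons a c b h q ih =>
    intro ha hb
    simp only [SimpleGraph.Walk.support_cons, List.mem_cons] at hp
    push_neg at hp
    have hc : c ∈ ({v}ᶜ : Set V) := fun hcv =>
      hp.2 (by rw [← Set.mem_singleton_iff.mp hcv]; exact SimpleGraph.Walk.start_mem_support q)
    refine SimpleGraph.Reachable.trans ?_ (ih hp.2 hc hb)
    exact SimpleGraph.Adj.reachable (by simpa using h)

/-- Reachability in T minus v iff there's a walk avoiding v. -/
lemma reach_iff_walk {a b : V} (ha : a ≠ v) (hb : b ≠ v) :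
    (SimpleGraph.induce ({v}ᶜ : Set V) T).Reachable ⟨a, ha⟩ ⟨b, hb⟩ ↔
      ∃ p : T.Walk a b, v ∉ p.support := by
  constructor
  · rintro ⟨q⟩
    refine ⟨(q.map (SimpleGraph.Embedding.induce ({v}ᶜ : Set V)).toHom : T.Walk a b), ?_⟩
    intro hv
    erw [SimpleGraph.Walk.support_map, List.mem_map] at hv
    obtain ⟨x, _, hx⟩ := hv
    exact x.2 (by simpa using hx)
  · rintro ⟨p, hp⟩
    exact reach_of_walk T v p hp ha hb
end Helpers
section Helpers2
variable {V : Type*} {T : SimpleGraph V} {v : V}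

/-- In a tree, v has at most one neighbor in each component of T - v. -/
lemma unique_neighbor (hT : T.IsTree) {u u' : V} (hu : T.Adj v u) (hu' : T.Adj v u')
    (q : T.Walk u u') (hq : v ∉ q.support) : u = u' := by
  have hq' : v ∉ (q.toPath : T.Walk u u').support :=
    fun h => hq (SimpleGraph.Walk.support_toPath_subset q h)
  have hp1 : (SimpleGraph.Walk.cons hu (q.toPath : T.Walk u u')).IsPath :=
    (q.toPath).2.cons hq'
  have hp2 : (SimpleGraph.Walk.cons hu' SimpleGraph.Walk.nil).IsPath := by
    simp [SimpleGraph.Walk.cons_isPath_iff, hu'.ne]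
  have heq := (hT.existsUnique_path v u').unique hp1 hp2
  have hlen := congrArg SimpleGraph.Walk.length heq
  simp only [SimpleGraph.Walk.length_cons, SimpleGraph.Walk.length_nil] at hlen
  have hz : (q.toPath : T.Walk u u').length = 0 := by omega
  exact SimpleGraph.Walk.eq_of_length_eq_zero hz

/-- If there is no v-avoiding walk between a and b, the distance splits through v. -/
lemma dist_split (hT : T.IsTree) {a b : V} (h : ¬ ∃ p : T.Walk a b, v ∉ p.support) :
    T.dist a b = T.dist a v + T.dist v b := by
  obtain ⟨p, hp⟩ := hT.isConnected.exists_walk_length_eq_dist a b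
  have hv : v ∈ p.support := by
    by_contra hv
    exact h ⟨p, hv⟩
  refine le_antisymm (hT.isConnected.dist_triangle) ?_
  calc T.dist a v + T.dist v b
      ≤ (p.takeUntil v hv).length + (p.dropUntil v hv).length :=
        Nat.add_le_add (SimpleGraph.dist_le _) (SimpleGraph.dist_le _)
    _ = p.length := by
        rw [← SimpleGraph.Walk.length_append, SimpleGraph.Walk.take_spec]
    _ = T.dist a b := hp

/-- If u is a neighbor of v in the same deleted component as w, the distance from v drops by 1. -/
lemma dist_drop (hT : T.IsTree) {u w : V} (hu : T.Adj v u)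
    (hw : ∃ q : T.Walk u w, v ∉ q.support) : T.dist v w = T.dist u w + 1 := by
  obtain ⟨q0, hq0⟩ := hw
  have hwv : w ≠ v := fun hwv => hq0 (hwv ▸ SimpleGraph.Walk.end_mem_support q0)
  obtain ⟨p, hp⟩ := hT.isConnected.exists_walk_length_eq_dist v w
  have hpath : p.IsPath := p.isPath_of_length_eq_dist hp
  cases p with
  | nil => exact absurd rfl hwv.symm
  | @cons _ c _ h q =>
    rw [SimpleGraph.Walk.cons_isPath_iff] at hpath
    -- c = u by uniqueness of neighbor
    have hcu : c = u := by
      refine unique_neighbor hT h hu (q.append q0.reverse) ?_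
      rw [SimpleGraph.Walk.mem_support_append_iff]
      push_neg
      exact ⟨hpath.2, by simpa using hq0⟩
    have hcu' : u = c := hcu.symm
    subst hcu'
    have h1 : T.dist u w ≤ q.length := SimpleGraph.dist_le q
    have h2 : T.dist v w ≤ T.dist v u + T.dist u w := hT.isConnected.dist_triangle
    have h3 : T.dist v u = 1 := SimpleGraph.dist_eq_one_iff_adj.mpr hu
    have h4 : q.length + 1 = T.dist v w := by simpa using hp
    omega
end Helpers2
section Helpers3
variable {V : Type*} [Fintype V] {T : SimpleGraph V} {v : V}

/-- Key equality: moving from v to a neighbor u changes the weighted distance sum by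
    c(T) - 2 * (weight of component of u). -/
lemma key_eq (hT : T.IsTree) (c : V → ℝ) {u : V} (hu : T.Adj v u) :
    ∑ w, c w * T.dist u w = ∑ w, c w * T.dist v w + ∑ w, c w
      - 2 * ∑ w, (if ∃ hw : w ∈ ({v}ᶜ : Set V),
          (SimpleGraph.induce ({v}ᶜ : Set V) T).connectedComponentMk ⟨w, hw⟩
            = (SimpleGraph.induce ({v}ᶜ : Set V) T).connectedComponentMk ⟨u, hu.ne'⟩
          then c w else 0) := by
  have hptw : ∀ w : V, c w * T.dist u w = c w * T.dist v w + c w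
      - 2 * (if ∃ hw : w ∈ ({v}ᶜ : Set V),
          (SimpleGraph.induce ({v}ᶜ : Set V) T).connectedComponentMk ⟨w, hw⟩
            = (SimpleGraph.induce ({v}ᶜ : Set V) T).connectedComponentMk ⟨u, hu.ne'⟩
          then c w else 0) := by
    intro w
    by_cases hP : ∃ hw : w ∈ ({v}ᶜ : Set V),
        (SimpleGraph.induce ({v}ᶜ : Set V) T).connectedComponentMk ⟨w, hw⟩
          = (SimpleGraph.induce ({v}ᶜ : Set V) T).connectedComponentMk ⟨u, hu.ne'⟩
    · obtain ⟨hw, hK⟩ := hP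
      have hreach := (SimpleGraph.ConnectedComponent.eq.mp hK).symm
      obtain ⟨q, hq⟩ := (reach_iff_walk T v hu.ne' hw).mp hreach
      have hd : T.dist v w = T.dist u w + 1 := dist_drop hT hu ⟨q, hq⟩
      rw [if_pos ⟨hw, hK⟩]
      push_cast [hd]
      ring
    · rw [if_neg hP]
      by_cases hwv : w = v
      · subst hwv
        rw [SimpleGraph.dist_comm (u := u) (v := w), SimpleGraph.dist_eq_one_iff_adj.mpr hu,
          SimpleGraph.dist_self]
        push_cast
        ring
      · have hnw : ¬ ∃ q : T.Walk u w, v ∉ q.support := by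
          rintro ⟨q, hq⟩
          exact hP ⟨hwv, (SimpleGraph.ConnectedComponent.eq.mpr
            ((reach_of_walk T v q hq hu.ne' hwv))).symm⟩
        have hd : T.dist u w = T.dist u v + T.dist v w := dist_split hT hnw
        rw [SimpleGraph.dist_comm (u := u) (v := v), SimpleGraph.dist_eq_one_iff_adj.mpr hu] at hd
        rw [hd]
        push_cast
        ring
  rw [Finset.sum_congr rfl (fun w _ => hptw w)]
  rw [Finset.sum_sub_distrib, Finset.sum_add_distrib, ← Finset.mul_sum]

/-- Key inequality for arbitrary u. -/
lemma key_ineq (hT : T.IsTree) (c : V → ℝ) (hc : ∀ w, 0 ≤ c w) {u : V} (hu : u ≠ v) :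
    ∑ w, c w * T.dist v w + (T.dist v u : ℝ) * (∑ w, c w)
      - 2 * (T.dist v u : ℝ) * ∑ w, (if ∃ hw : w ∈ ({v}ᶜ : Set V),
          (SimpleGraph.induce ({v}ᶜ : Set V) T).connectedComponentMk ⟨w, hw⟩
            = (SimpleGraph.induce ({v}ᶜ : Set V) T).connectedComponentMk ⟨u, hu⟩
          then c w else 0)
      ≤ ∑ w, c w * T.dist u w := by
  have hptw : ∀ w : V, c w * T.dist v w + (T.dist v u : ℝ) * c w
      - 2 * (T.dist v u : ℝ) * (if ∃ hw : w ∈ ({v}ᶜ : Set V),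
          (SimpleGraph.induce ({v}ᶜ : Set V) T).connectedComponentMk ⟨w, hw⟩
            = (SimpleGraph.induce ({v}ᶜ : Set V) T).connectedComponentMk ⟨u, hu⟩
          then c w else 0) ≤ c w * T.dist u w := by
    intro w
    by_cases hP : ∃ hw : w ∈ ({v}ᶜ : Set V),
        (SimpleGraph.induce ({v}ᶜ : Set V) T).connectedComponentMk ⟨w, hw⟩
          = (SimpleGraph.induce ({v}ᶜ : Set V) T).connectedComponentMk ⟨u, hu⟩
    · rw [if_pos hP]
      have htri : T.dist v w ≤ T.dist v u + T.dist u w := hT.isConnected.dist_triangle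
      have htri' : (T.dist v w : ℝ) ≤ (T.dist v u : ℝ) + (T.dist u w : ℝ) := by
        exact_mod_cast htri
      nlinarith [hc w, mul_le_mul_of_nonneg_left htri' (hc w)]
    · rw [if_neg hP]
      by_cases hwv : w = v
      · subst hwv
        rw [SimpleGraph.dist_comm (u := u) (v := w), SimpleGraph.dist_self]
        push_cast
        nlinarith [hc w]
      · have hnw : ¬ ∃ q : T.Walk u w, v ∉ q.support := by
          rintro ⟨q, hq⟩
          exact hP ⟨hwv, (SimpleGraph.ConnectedComponent.eq.mpr
            ((reach_of_walk T v q hq hu hwv))).symm⟩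
        have hd : T.dist u w = T.dist u v + T.dist v w := dist_split hT hnw
        rw [hd, SimpleGraph.dist_comm (u := u) (v := v)]
        push_cast
        nlinarith [hc w]
  calc ∑ w, c w * T.dist v w + (T.dist v u : ℝ) * (∑ w, c w)
      - 2 * (T.dist v u : ℝ) * ∑ w, (if ∃ hw : w ∈ ({v}ᶜ : Set V),
          (SimpleGraph.induce ({v}ᶜ : Set V) T).connectedComponentMk ⟨w, hw⟩
            = (SimpleGraph.induce ({v}ᶜ : Set V) T).connectedComponentMk ⟨u, hu⟩
          then c w else 0)
      = ∑ w, (c w * T.dist v w + (T.dist v u : ℝ) * c w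
        - 2 * (T.dist v u : ℝ) * (if ∃ hw : w ∈ ({v}ᶜ : Set V),
          (SimpleGraph.induce ({v}ᶜ : Set V) T).connectedComponentMk ⟨w, hw⟩
            = (SimpleGraph.induce ({v}ᶜ : Set V) T).connectedComponentMk ⟨u, hu⟩
          then c w else 0)) := by
        rw [Finset.sum_sub_distrib, Finset.sum_add_distrib, ← Finset.mul_sum, ← Finset.mul_sum]
    _ ≤ ∑ w, c w * T.dist u w := Finset.sum_le_sum (fun w _ => hptw w)

/-- Every component of T - v contains a neighbor of v. -/
lemma exists_neighbor (hT : T.IsTree)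
    (K : (SimpleGraph.induce ({v}ᶜ : Set V) T).ConnectedComponent) :
    ∃ (u : V) (hu : T.Adj v u),
      (SimpleGraph.induce ({v}ᶜ : Set V) T).connectedComponentMk ⟨u, hu.ne'⟩ = K := by
  obtain ⟨⟨x, hxmem⟩, hx⟩ := K.exists_rep
  have hxv : x ≠ v := hxmem
  obtain ⟨p, hp, -⟩ := hT.existsUnique_path v x
  cases p with
  | nil => exact absurd rfl hxv.symm
  | @cons _ c _ h q =>
    rw [SimpleGraph.Walk.cons_isPath_iff] at hp
    refine ⟨c, h, ?_⟩
    rw [← hx]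
    exact SimpleGraph.ConnectedComponent.eq.mpr (reach_of_walk T v q hp.2 h.ne' hxmem)
end Helpers3

theorem median_iff_branch_weight {V : Type*} [Fintype V]
    (T : SimpleGraph V) (hT : T.IsTree) (c : V → ℝ) (hc : ∀ v, 0 ≤ c v) (v : V) :
    (∀ u : V, (∑ w, c w * T.dist v w) ≤ ∑ w, c w * T.dist u w) ↔
    (∀ K : (SimpleGraph.induce ({v}ᶜ : Set V) T).ConnectedComponent,
        (∑ w, if ∃ hw : w ∈ ({v}ᶜ : Set V),
            (SimpleGraph.induce ({v}ᶜ : Set V) T).connectedComponentMk ⟨w, hw⟩ = K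
          then c w else 0)
          ≤ (∑ w, c w) / 2) := by
  constructor
  · intro hmin K
    obtain ⟨u, hu, hK⟩ := exists_neighbor hT K
    have heq := key_eq hT c hu
    rw [hK] at heq
    have hle := hmin u
    linarith
  · intro hbw u
    by_cases huv : u = v
    · subst huv; exact le_rfl
    · have hK := hbw ((SimpleGraph.induce ({v}ᶜ : Set V) T).connectedComponentMk ⟨u, huv⟩)
      have hineq := key_ineq hT c hc huv
      have hD : (0:ℝ) ≤ (T.dist v u : ℝ) := Nat.cast_nonneg _
      nlinarith [mul_nonneg hD (sub_nonneg.mpr hK)]
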